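/- The functor L : Lab → Volt (sending (G,Γ,β) to (G,Γ,α) with α(d) = β(s(d))⁻¹β(t(d))) is left adjoint to the functor R : Volt → Lab sending (G,Γ,α) to the pullback graph G ×_{ℓ(Γ)} K̊(Γ) (over the cospan α : G → ℓ(Γ), q_Γ : K̊(Γ) → ℓ(Γ)) labeled by the projection to K̊(Γ). -/

import Mathlib

open CategoryTheory

structure DGraph where
  V : Type
  D : Type
  s : D → V
  t : D → V
  inv : D → D
  inv_inv : ∀ d, inv (inv d) = d
  s_inv : ∀ d, s (inv d) = t d

@[ext]
structure GraphHom (G H : DGraph) where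
  fV : G.V → H.V
  fD : G.D → H.D
  map_s : ∀ d, H.s (fD d) = fV (G.s d)
  map_t : ∀ d, H.t (fD d) = fV (G.t d)
  map_inv : ∀ d, H.inv (fD d) = fD (G.inv d)

instance : Category DGraph where
  Hom := GraphHom
  id G := ⟨id, id, fun _ => rfl, fun _ => rfl, fun _ => rfl⟩
  comp f g := ⟨g.fV ∘ f.fV, g.fD ∘ f.fD,
    fun d => by simp [g.map_s, f.map_s],
    fun d => by simp [g.map_t, f.map_t],
    fun d => by simp [g.map_inv, f.map_inv]⟩


/-- A group labeled graph: a graph with vertices labeled by elements of a group. -/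
structure Lab where
  G : DGraph
  Γ : Type
  [grp : Group Γ]
  β : G.V → Γ

attribute [instance] Lab.grp

/-- A morphism of group labeled graphs. -/
structure LabHom (X Y : Lab) where
  f : GraphHom X.G Y.G
  h : X.Γ →* Y.Γ
  compat : ∀ v, h (X.β v) = Y.β (f.fV v)

/-- The category of group labeled graphs. -/
instance : Category Lab where
  Hom := LabHom
  id X := ⟨⟨id, id, fun _ => rfl, fun _ => rfl, fun _ => rfl⟩, MonoidHom.id _, fun _ => rfl⟩
  comp φ ψ :=
    ⟨⟨ψ.f.fV ∘ φ.f.fV, ψ.f.fD ∘ φ.f.fD,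
      fun d => by simp [ψ.f.map_s, φ.f.map_s],
      fun d => by simp [ψ.f.map_t, φ.f.map_t],
      fun d => by simp [ψ.f.map_inv, φ.f.map_inv]⟩,
     ψ.h.comp φ.h,
     fun v => by simp [φ.compat, ψ.compat]⟩

/-- A voltage graph: a graph with darts labeled by elements of a group,
compatibly with the dart-reversing involution. -/
structure Volt where
  G : DGraph
  Γ : Type
  [grp : Group Γ]
  α : G.D → Γ
  volt : ∀ d, α (G.inv d) = (α d)⁻¹

attribute [instance] Volt.grp

/-- A morphism of voltage graphs. -/
structure VoltHom (X Y : Volt) where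
  f : GraphHom X.G Y.G
  h : X.Γ →* Y.Γ
  compat : ∀ d, h (X.α d) = Y.α (f.fD d)

/-- The category of voltage graphs. -/
instance : Category Volt where
  Hom := VoltHom
  id X := ⟨⟨id, id, fun _ => rfl, fun _ => rfl, fun _ => rfl⟩, MonoidHom.id _, fun _ => rfl⟩
  comp φ ψ :=
    ⟨⟨ψ.f.fV ∘ φ.f.fV, ψ.f.fD ∘ φ.f.fD,
      fun d => by simp [ψ.f.map_s, φ.f.map_s],
      fun d => by simp [ψ.f.map_t, φ.f.map_t],
      fun d => by simp [ψ.f.map_inv, φ.f.map_inv]⟩,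
     ψ.h.comp φ.h,
     fun d => by simp [φ.compat, ψ.compat]⟩

lemma DGraph.t_inv (G : DGraph) (d : G.D) : G.t (G.inv d) = G.s d := by
  conv_rhs => rw [← G.inv_inv d]
  rw [G.s_inv]

/-- The functor `L : Lab → Volt`, assigning to a labeling `β` the voltage
`α(d) = β(s(d))⁻¹ · β(t(d))`. -/
def L : Lab ⥤ Volt where
  obj X :=
    { G := X.G
      Γ := X.Γ
      α := fun d => (X.β (X.G.s d))⁻¹ * X.β (X.G.t d)
      volt := fun d => by try dsimp only
                          rw [X.G.s_inv, X.G.t_inv]; simp [mul_inv_rev] }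
  map φ :=
    ⟨φ.f, φ.h, fun d => by
      dsimp only
      rw [φ.f.map_s, φ.f.map_t, ← φ.compat, ← φ.compat, map_mul, map_inv]⟩

/-- The pullback graph `G ×_{ℓ(Γ)} K̊(Γ)` of a voltage graph. -/
def pbGraph (X : Volt) : DGraph where
  V := X.G.V × X.Γ
  D := {p : X.G.D × (X.Γ × X.Γ) // p.2.1⁻¹ * p.2.2 = X.α p.1}
  s := fun d => (X.G.s d.val.1, d.val.2.1)
  t := fun d => (X.G.t d.val.1, d.val.2.2)
  inv := fun d => ⟨(X.G.inv d.val.1, (d.val.2.2, d.val.2.1)), by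
    rw [X.volt, ← d.prop]; simp [mul_inv_rev]⟩
  inv_inv := fun d => Subtype.ext (Prod.ext (X.G.inv_inv _) rfl)
  s_inv := fun d => Prod.ext (X.G.s_inv _) rfl

/-- The functor `R : Volt → Lab`, sending a voltage graph to the pullback
graph `G ×_{ℓ(Γ)} K̊(Γ)` labeled by the projection to `K̊(Γ)`. -/
def R : Volt ⥤ Lab where
  obj X :=
    { G := pbGraph X
      Γ := X.Γ
      β := fun p => p.2 }
  map {X Y} φ :=
    ⟨⟨fun p => (φ.f.fV p.1, φ.h p.2),
      fun d => ⟨(φ.f.fD d.val.1, (φ.h d.val.2.1, φ.h d.val.2.2)), by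
        rw [← map_inv, ← map_mul, d.prop, φ.compat]⟩,
      fun d => Prod.ext (φ.f.map_s _) rfl,
      fun d => Prod.ext (φ.f.map_t _) rfl,
      fun d => Subtype.ext (Prod.ext (φ.f.map_inv _) rfl)⟩,
     φ.h, fun _ => rfl⟩

/-- `L` is left adjoint to `R`. -/
theorem L_adj_R : Nonempty (L ⊣ R) := by
  refine ⟨CategoryTheory.Adjunction.mkOfUnitCounit
    { unit :=
        { app := fun X =>
            (⟨⟨fun v => (v, X.β v),
              fun d => ⟨(d, (X.β (X.G.s d), X.β (X.G.t d))), rfl⟩,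
              fun d => rfl, fun d => rfl,
              fun d => Subtype.ext (Prod.ext rfl
                (Prod.ext (congrArg X.β (X.G.s_inv d)).symm
                  (congrArg X.β (X.G.t_inv d)).symm))⟩,
             MonoidHom.id _, fun _ => rfl⟩ : X ⟶ (L ⋙ R).obj X)
          naturality := fun X Y φ => ?_ }
      counit :=
        { app := fun Y =>
            (⟨⟨fun p => p.1, fun d => d.val.1,
              fun d => rfl, fun d => rfl, fun d => rfl⟩,
             MonoidHom.id _, fun d => d.prop⟩ : (R ⋙ L).obj Y ⟶ Y)
          naturality := fun X Y φ => ?_ }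
      left_triangle := ?_
      right_triangle := ?_ }⟩
  · show LabHom.mk _ _ _ = LabHom.mk _ _ _
    congr 1
    · refine GraphHom.ext ?_ ?_
      · funext v; exact Prod.ext rfl (φ.compat v).symm
      · funext d
        refine Subtype.ext (Prod.ext rfl (Prod.ext ?_ ?_)) <;> dsimp
        · show Y.β (Y.G.s (φ.f.fD d)) = φ.h (X.β (X.G.s d))
          exact (congrArg Y.β (φ.f.map_s d)).trans (φ.compat _).symm
        · show Y.β (Y.G.t (φ.f.fD d)) = φ.h (X.β (X.G.t d))
          exact (congrArg Y.β (φ.f.map_t d)).trans (φ.compat _).symm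
  · show VoltHom.mk _ _ _ = VoltHom.mk _ _ _
    congr 1
  · apply NatTrans.ext; funext X
    show VoltHom.mk _ _ _ = VoltHom.mk _ _ _
    congr 1
  · apply NatTrans.ext; funext Y
    show LabHom.mk _ _ _ = LabHom.mk _ _ _
    congr 1
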